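/- Under the hard concrete construction with u uniform on (0,1), the probability that the gate e is nonzero equals Sigmoid(log α − β·log(−γ/δ)). -/

import Mathlib

open MeasureTheory

/-- Hard concrete distribution: with `u` uniform on `(0,1)`, the probability that the
gate `e(u) = min 1 (max 0 (Sigmoid((log u − log(1−u) + log α)/β)·(δ−γ)+γ))` is nonzero
equals `Sigmoid(log α − β·log(−γ/δ))`. -/
theorem hard_concrete_nonzero_prob (α β γ δ : ℝ) (hα : 0 < α) (hβ : 0 < β)
    (hγ : γ < 0) (hδ : 1 < δ) :
    volume {u ∈ Set.Ioo (0 : ℝ) 1 |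
        min 1 (max 0
          ((1 / (1 + Real.exp (-((Real.log u - Real.log (1 - u) + Real.log α) / β))))
            * (δ - γ) + γ)) ≠ 0}
      = ENNReal.ofReal (1 / (1 + Real.exp (-(Real.log α - β * Real.log (-γ / δ))))) := by
  set L : ℝ := Real.log α - β * Real.log (-γ / δ) with hLdef
  have hELpos : (0:ℝ) < Real.exp (-L) := Real.exp_pos _
  have hden : (0:ℝ) < 1 + Real.exp (-L) := by linarith
  set u0 : ℝ := Real.exp (-L) / (1 + Real.exp (-L)) with hu0def
  have hu0pos : 0 < u0 := div_pos hELpos hden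
  have hu0lt : u0 < 1 := (div_lt_one hden).2 (by linarith)
  have hδγpos : (0:ℝ) < -δ/γ := div_pos_of_neg_of_neg (by linarith) hγ
  have hγδpos : (0:ℝ) < -γ/δ := div_pos (by linarith) (by linarith)
  have stepA : ∀ y : ℝ, min 1 (max 0 y) ≠ 0 ↔ 0 < y := by
    intro y
    constructor
    · intro h
      by_contra hy
      push_neg at hy
      simp [max_eq_left hy] at h
    · intro hy
      have h1 : (0:ℝ) < min 1 (max 0 y) := lt_min one_pos (lt_max_of_lt_right hy)
      exact ne_of_gt h1
  have key : ∀ u : ℝ, 0 < u → u < 1 →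
      (min 1 (max 0
          ((1 / (1 + Real.exp (-((Real.log u - Real.log (1 - u) + Real.log α) / β))))
            * (δ - γ) + γ)) ≠ 0 ↔ u0 < u) := by
    intro u hu hu1
    have h1u : (0:ℝ) < 1 - u := by linarith
    set x : ℝ := (Real.log u - Real.log (1 - u) + Real.log α) / β with hx
    set E : ℝ := Real.exp (-x) with hEdef
    have hE : 0 < E := Real.exp_pos _
    have h1E : 0 < 1 + E := by linarith
    have hseq : (1/(1+E)) * (δ-γ) + γ = (δ + γ*E)/(1+E) := by
      field_simp
      ring
    rw [stepA, hseq]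
    have hiff1 : 0 < (δ + γ*E)/(1+E) ↔ 0 < δ + γ*E := by
      rw [div_pos_iff]
      constructor
      · rintro (⟨h, _⟩ | ⟨_, h⟩)
        · exact h
        · linarith
      · intro h
        exact Or.inl ⟨h, h1E⟩
    have hiff2 : 0 < δ + γ*E ↔ E < -δ/γ := by
      rw [lt_div_iff_of_neg hγ]
      constructor <;> intro h <;> nlinarith
    have hiff3 : E < -δ/γ ↔ -x < Real.log (-δ/γ) := by
      rw [hEdef]
      rw [show -δ/γ = Real.exp (Real.log (-δ/γ)) from (Real.exp_log hδγpos).symm]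
      rw [Real.exp_lt_exp]
      rw [Real.exp_log hδγpos]
    have hloginv : Real.log (-δ/γ) = - Real.log (-γ/δ) := by
      rw [← Real.log_inv]
      congr 1
      rw [inv_div, div_neg, neg_div]
    have hiff4 : -x < Real.log (-δ/γ) ↔ Real.log (-γ/δ) < x := by
      rw [hloginv]
      constructor <;> intro h <;> linarith
    have hiff5 : Real.log (-γ/δ) < x ↔ -L < Real.log u - Real.log (1-u) := by
      rw [hx, lt_div_iff₀ hβ, hLdef]
      constructor <;> intro h <;> nlinarith
    have hiff6 : -L < Real.log u - Real.log (1-u) ↔ Real.exp (-L) < u/(1-u) := by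
      rw [show u/(1-u) = Real.exp (Real.log u - Real.log (1-u)) by
        rw [Real.exp_sub, Real.exp_log hu, Real.exp_log h1u]]
      rw [Real.exp_lt_exp]
    have hiff7 : Real.exp (-L) < u/(1-u) ↔ u0 < u := by
      rw [lt_div_iff₀ h1u, hu0def, div_lt_iff₀ hden]
      constructor <;> intro h <;> nlinarith
    rw [hiff1, hiff2, hiff3, hiff4, hiff5, hiff6, hiff7]
  have hset : {u ∈ Set.Ioo (0:ℝ) 1 |
      min 1 (max 0
          ((1 / (1 + Real.exp (-((Real.log u - Real.log (1 - u) + Real.log α) / β))))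
            * (δ - γ) + γ)) ≠ 0} = Set.Ioo u0 1 := by
    ext u
    simp only [Set.mem_setOf_eq, Set.mem_Ioo]
    constructor
    · rintro ⟨⟨h1, h2⟩, h3⟩
      exact ⟨(key u h1 h2).1 h3, h2⟩
    · rintro ⟨h1, h2⟩
      have hu : 0 < u := lt_trans hu0pos h1
      exact ⟨⟨hu, h2⟩, (key u hu h2).2 h1⟩
  rw [hset, Real.volume_Ioo]
  congr 1
  rw [hu0def]
  field_simp
  ring
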